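/- Let A ∈ ℂ^{m×n} and W ∈ ℂ^{n×m} with rank(WAW) = rank(A). Then X ∈ ℂ^{m×n} is a {1',2',3'}-inverse of A if and only if X is a {1,2,3}-inverse of WAW, i.e., (WAW)X(WAW) = WAW, X(WAW)X = X, and ((WAW)X)* = (WAW)X. -/

import Mathlib

open Matrix

lemma exists_factor {a b c : ℕ} (M : Matrix (Fin a) (Fin b) ℂ) (N : Matrix (Fin a) (Fin c) ℂ)
    (h : LinearMap.range N.mulVecLin ≤ LinearMap.range M.mulVecLin) :
    ∃ U : Matrix (Fin b) (Fin c) ℂ, M * U = N := by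
  have hj : ∀ j, ∃ u, M.mulVec u = N.mulVec (Pi.single j 1) := by
    intro j
    have : N.mulVec (Pi.single j 1) ∈ LinearMap.range M.mulVecLin :=
      h ⟨Pi.single j 1, rfl⟩
    obtain ⟨u, hu⟩ := this
    exact ⟨u, hu⟩
  choose u hu using hj
  refine ⟨Matrix.of fun i j => u j i, ?_⟩
  ext i j
  have h2 : (M.mulVec (u j)) i = (N.mulVec (Pi.single j 1)) i := by rw [hu j]
  simpa [Matrix.mul_apply, Matrix.mulVec, dotProduct, Pi.single_apply, mul_comm] using h2

lemma range_mul_le {a b c : ℕ} (M : Matrix (Fin a) (Fin b) ℂ) (N : Matrix (Fin b) (Fin c) ℂ) :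
    LinearMap.range (M * N).mulVecLin ≤ LinearMap.range M.mulVecLin := by
  rw [Matrix.mulVecLin_mul]
  exact LinearMap.range_comp_le_range _ _

lemma range_eq_of_rank {a b c : ℕ} (M : Matrix (Fin a) (Fin b) ℂ) (N : Matrix (Fin b) (Fin c) ℂ)
    (h : M.rank ≤ (M * N).rank) :
    LinearMap.range M.mulVecLin ≤ LinearMap.range (M * N).mulVecLin := by
  have hle := range_mul_le M N
  have := Submodule.eq_of_le_of_finrank_le hle h
  exact this.ge

/-- under `rank (W * A * W) = rank A`, `X` is a `{1',2',3'}`-inverse of `A`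
iff `X` is a `{1,2,3}`-inverse of `W * A * W`. -/
theorem stmt1 (m n : ℕ) (A : Matrix (Fin m) (Fin n) ℂ) (W : Matrix (Fin n) (Fin m) ℂ)
    (hrank : (W * A * W).rank = A.rank) (X : Matrix (Fin m) (Fin n) ℂ) :
    (A * W * X * W * A = A ∧
      X * W * A * W * X = X ∧
      (W * A * W * X)ᴴ = W * A * W * X) ↔
    ((W * A * W) * X * (W * A * W) = W * A * W ∧
      X * (W * A * W) * X = X ∧
      ((W * A * W) * X)ᴴ = (W * A * W) * X) := by
  constructor
  · rintro ⟨h1, h2, h3⟩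
    refine ⟨?_, by simpa [Matrix.mul_assoc] using h2, by simpa [Matrix.mul_assoc] using h3⟩
    calc (W * A * W) * X * (W * A * W) = W * (A * W * X * W * A) * W := by
            simp only [Matrix.mul_assoc]
      _ = W * A * W := by rw [h1]
  · rintro ⟨h1, h2, h3⟩
    refine ⟨?_, by simpa [Matrix.mul_assoc] using h2, by simpa [Matrix.mul_assoc] using h3⟩
    -- rank facts
    have hAW : A.rank ≤ (A * W).rank := by
      have ha : (W * (A * W)).rank ≤ (A * W).rank := Matrix.rank_mul_le_right _ _
      rw [← Matrix.mul_assoc, hrank] at ha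
      exact ha
    have hWA : A.rank ≤ (W * A).rank := by
      have ha : ((W * A) * W).rank ≤ (W * A).rank := Matrix.rank_mul_le_left _ _
      rw [hrank] at ha
      exact ha
    -- U with A * W * U = A
    obtain ⟨U, hU⟩ : ∃ U : Matrix (Fin m) (Fin n) ℂ, (A * W) * U = A := by
      apply exists_factor
      exact range_eq_of_rank A W hAW
    -- V with V * (W * A) = A
    obtain ⟨V', hV'⟩ : ∃ V' : Matrix (Fin n) (Fin m) ℂ, (W * A)ᵀ * V' = Aᵀ := by
      apply exists_factor
      have : Aᵀ.rank ≤ (Aᵀ * Wᵀ).rank := by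
        rw [← Matrix.transpose_mul, Matrix.rank_transpose, Matrix.rank_transpose]
        exact hWA
      have h' := range_eq_of_rank Aᵀ Wᵀ this
      rw [Matrix.transpose_mul]
      exact h'
    have hV : V'ᵀ * (W * A) = A := by
      have := congrArg Matrix.transpose hV'
      simpa [Matrix.transpose_mul] using this
    set V := V'ᵀ
    -- main computation
    have step : A * W * X * W * A = V * (W * A) * (W * X * W) * (A * W * U) := by
      rw [hV, hU]; simp only [Matrix.mul_assoc]
    rw [step]
    calc V * (W * A) * (W * X * W) * (A * W * U)
        = V * ((W * A * W) * X * (W * A * W)) * U := by simp only [Matrix.mul_assoc]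
      _ = V * (W * A * W) * U := by rw [h1]
      _ = V * (W * (A * W * U)) := by simp only [Matrix.mul_assoc]
      _ = A := by rw [hU, ← Matrix.mul_assoc] at *; exact hV
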